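/- Let X be a Banach space and let B : X × X → X be a continuous bilinear map, with operator norm ‖B‖ := sup{‖B(u,v)‖ : ‖u‖ ≤ 1, ‖v‖ ≤ 1}. Let ε > 0 satisfy ε < 1/(4‖B‖). Then for every y ∈ X with ‖y‖ ≤ ε there exists a unique x ∈ X with ‖x‖ ≤ 2ε such that x = y + B(x,x). -/

import Mathlib

/-- **Fixed point lemma for bilinear maps.** Let X be a Banach space and B : X × X → X a
continuous bilinear map with operator norm ‖B‖ = sup{‖B(u,v)‖ : ‖u‖ ≤ 1, ‖v‖ ≤ 1}.
If ε > 0 satisfies ε < 1/(4‖B‖) (i.e. 4‖B‖ε < 1), then for every y ∈ X with ‖y‖ ≤ ε there is a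
unique x ∈ X with ‖x‖ ≤ 2ε satisfying x = y + B(x,x). -/
theorem bilinear_fixed_point {X : Type*} [NormedAddCommGroup X] [NormedSpace ℝ X]
    [CompleteSpace X] (B : X →L[ℝ] X →L[ℝ] X) (ε : ℝ) (hε : 0 < ε)
    (hsmall : 4 * ‖B‖ * ε < 1) :
    ∀ y : X, ‖y‖ ≤ ε → ∃! x : X, ‖x‖ ≤ 2 * ε ∧ x = y + B x x := by
  intro y hy
  have hB : 0 ≤ ‖B‖ := B.opNorm_nonneg
  -- key estimate
  have key : ∀ a b : X, ‖a‖ ≤ 2 * ε → ‖b‖ ≤ 2 * ε →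
      ‖(y + B a a) - (y + B b b)‖ ≤ (4 * ‖B‖ * ε) * ‖a - b‖ := by
    intro a b ha hb
    have : (y + B a a) - (y + B b b) = B a (a - b) + B (a - b) b := by
      simp [map_sub, ContinuousLinearMap.sub_apply]; try abel
    rw [this]
    calc ‖B a (a - b) + B (a - b) b‖ ≤ ‖B a (a - b)‖ + ‖B (a - b) b‖ := norm_add_le _ _
      _ ≤ ‖B‖ * ‖a‖ * ‖a - b‖ + ‖B‖ * ‖a - b‖ * ‖b‖ := by
          gcongr <;> exact B.le_opNorm₂ _ _
      _ ≤ ‖B‖ * (2 * ε) * ‖a - b‖ + ‖B‖ * ‖a - b‖ * (2 * ε) := by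
          gcongr
      _ = (4 * ‖B‖ * ε) * ‖a - b‖ := by ring
  -- the map preserves the ball
  have hmem : ∀ a : X, ‖a‖ ≤ 2 * ε → ‖y + B a a‖ ≤ 2 * ε := by
    intro a ha
    have h1 : ‖B a a‖ ≤ ‖B‖ * (2 * ε) * (2 * ε) := by
      calc ‖B a a‖ ≤ ‖B‖ * ‖a‖ * ‖a‖ := B.le_opNorm₂ _ _
        _ ≤ ‖B‖ * (2 * ε) * (2 * ε) := by gcongr
    have h2 : ‖B‖ * (2 * ε) * (2 * ε) = (4 * ‖B‖ * ε) * ε := by ring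
    have h3 : (4 * ‖B‖ * ε) * ε ≤ 1 * ε := by
      gcongr
    calc ‖y + B a a‖ ≤ ‖y‖ + ‖B a a‖ := norm_add_le _ _
      _ ≤ ε + 1 * ε := by
          have := h1.trans (h2 ▸ h3)
          linarith
      _ = 2 * ε := by ring
  -- set up the contracting map on the closed ball
  set K := Metric.closedBall (0 : X) (2 * ε) with hK
  have hKmem : ∀ a : X, a ∈ K ↔ ‖a‖ ≤ 2 * ε := by
    intro a; simp [hK, Metric.mem_closedBall, dist_zero_right]
  have : IsClosed K := Metric.isClosed_closedBall
  haveI : CompleteSpace K := this.completeSpace_coe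
  haveI : Nonempty K := ⟨⟨0, by simp [hK]; positivity⟩⟩
  let g : K → K := fun a => ⟨y + B a a, (hKmem _).2 (hmem a ((hKmem _).1 a.2))⟩
  have hk0 : 0 ≤ 4 * ‖B‖ * ε := by positivity
  set k : NNReal := ⟨4 * ‖B‖ * ε, hk0⟩ with hkdef
  have hc : ContractingWith k g := by
    constructor
    · exact_mod_cast hsmall
    · apply LipschitzWith.of_dist_le_mul
      intro a b
      have := key a b ((hKmem _).1 a.2) ((hKmem _).1 b.2)
      simpa [g, Subtype.dist_eq, dist_eq_norm] using (show ‖(y + B a a) - (y + B b b)‖ ≤ (k : ℝ) * ‖(a : X) - b‖ from this)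
  let x₀ : K := hc.fixedPoint g
  have hfix : g x₀ = x₀ := hc.fixedPoint_isFixedPt
  refine ⟨x₀.val, ⟨(hKmem _).1 x₀.2, ?_⟩, ?_⟩
  · have := congrArg Subtype.val hfix
    exact this.symm
  · rintro z ⟨hz1, hz2⟩
    -- uniqueness
    have hd : ‖z - x₀.val‖ ≤ (4 * ‖B‖ * ε) * ‖z - x₀.val‖ := by
      have hx : (x₀ : X) = y + B x₀ x₀ := (congrArg Subtype.val hfix).symm
      calc ‖z - x₀.val‖ = ‖(y + B z z) - (y + B x₀ x₀)‖ := by rw [← hz2, ← hx]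
        _ ≤ (4 * ‖B‖ * ε) * ‖z - x₀.val‖ := key z x₀ hz1 ((hKmem _).1 x₀.2)
    by_contra hne
    have hpos : 0 < ‖z - x₀.val‖ := by
      rw [norm_pos_iff, sub_ne_zero]; exact fun h => hne (h ▸ rfl)
    nlinarith
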